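/- Fix integers $d \ge 1$ and $1 \le s \le d$, a finite set $J \subset \mathbb{N}$ with $|J| \ge d$, and $j \in \mathbb{N} \setminus J$. Let $\alpha \in J^{s-1}$, $\beta \in J^{d+1}$, $\gamma \in J^{d-s}$ be lists of elements of $J$, and let $\beta' \in (J \cup \{j\})^{d+2}$ and $\gamma' \in (J \cup \{j\})^{d+1-s}$ be obtained from $\beta$ and $\gamma$ respectively by appending $j$ as the last entry. Then $\eta_j([[\alpha\,\beta^\bullet\,\gamma]]) = [[\alpha\,\beta'^\bullet\,\gamma']]$, where the left-hand van der Waerden polynomial is computed in $R_{J,d}$ (with parameter $s$) and the right-hand one in $R_{J\cup\{j\},d+1}$ (with the same parameter $s$). -/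

import Mathlib

/-- The shuffle permutation `(τ₁, …, τ_s, τ*₁, …, τ*_{n-s})` of `(1, …, n)` determined by
an `s`-element subset `T` of `Fin n` (listing `T` in increasing order followed by its
complement in increasing order). -/
noncomputable def shuffle {n s : ℕ} (T : Finset (Fin n)) (hT : T.card = s) :
    Equiv.Perm (Fin n) := by
  have hTc : Tᶜ.card = n - s := by
    rw [Finset.card_compl, hT, Fintype.card_fin]
  refine Equiv.ofBijective
    (fun k => if h : (k : ℕ) < s then (T.orderIsoOfFin hT ⟨(k : ℕ), h⟩ : Fin n)
      else (Tᶜ.orderIsoOfFin hTc ⟨(k : ℕ) - s, by have := k.isLt; omega⟩ : Fin n))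
    (Finite.injective_iff_bijective.mp ?_)
  intro p q hpq
  by_cases hp : (p : ℕ) < s <;> by_cases hq : (q : ℕ) < s <;>
    simp only [hp, hq, dif_pos, dif_neg, not_false_iff] at hpq
  · have h1 : (⟨(p : ℕ), hp⟩ : Fin s) = ⟨(q : ℕ), hq⟩ :=
      (T.orderIsoOfFin hT).injective (Subtype.ext hpq)
    exact Fin.ext (congrArg (@Fin.val s) h1)
  · exfalso
    have h1 := ((T.orderIsoOfFin hT) ⟨(p : ℕ), hp⟩).2
    have h2 := ((Tᶜ.orderIsoOfFin hTc) ⟨(q : ℕ) - s, by have := q.isLt; omega⟩).2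
    rw [hpq] at h1
    exact (Finset.mem_compl.mp h2) h1
  · exfalso
    have h1 := ((T.orderIsoOfFin hT) ⟨(q : ℕ), hq⟩).2
    have h2 := ((Tᶜ.orderIsoOfFin hTc) ⟨(p : ℕ) - s, by have := p.isLt; omega⟩).2
    rw [← hpq] at h1
    exact (Finset.mem_compl.mp h2) h1
  · have h1 : (⟨(p : ℕ) - s, by have := p.isLt; omega⟩ : Fin (n - s)) =
        ⟨(q : ℕ) - s, by have := q.isLt; omega⟩ :=
      (Tᶜ.orderIsoOfFin hTc).injective (Subtype.ext hpq)
    have h2 : (p : ℕ) - s = (q : ℕ) - s := congrArg (@Fin.val (n - s)) h1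
    exact Fin.ext (by omega)

/-- The polynomial ring `R_{J,d}` over `ℂ` with one variable `X_S` for each `d`-element
subset `S ⊆ J`. -/
abbrev BracketRing (J : Finset ℕ) (d : ℕ) : Type :=
  MvPolynomial {S : Finset ℕ // S ⊆ J ∧ S.card = d} ℂ

/-- The formal bracket `[λ₁ ⋯ λ_d] ∈ R_{J,d}`: zero if the entries are not pairwise
distinct, and otherwise `sign π • X_{{λ₁,…,λ_d}}` where `π` is the permutation sorting
the list into increasing order. -/
noncomputable def fbr (J : Finset ℕ) (d : ℕ) (lam : Fin d → ℕ) : BracketRing J d :=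
  if h : Function.Injective lam ∧ ∀ k, lam k ∈ J then
    have hsub : Finset.image lam Finset.univ ⊆ J := by
      intro x hx
      obtain ⟨k, _, rfl⟩ := Finset.mem_image.mp hx
      exact h.2 k
    have hcard : (Finset.image lam Finset.univ).card = d := by
      rw [Finset.card_image_of_injective _ h.1, Finset.card_univ, Fintype.card_fin]
    let e := (Finset.image lam Finset.univ).orderIsoOfFin hcard
    let π : Fin d → Fin d := fun k =>
      e.symm ⟨lam k, Finset.mem_image_of_mem _ (Finset.mem_univ k)⟩
    have hπ : Function.Bijective π := by
      apply Finite.injective_iff_bijective.mp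
      intro p q hpq
      exact h.1 (congrArg Subtype.val (e.symm.injective hpq))
    ((Equiv.Perm.sign (Equiv.ofBijective π hπ) : ℤ)) •
      MvPolynomial.X ⟨Finset.image lam Finset.univ, hsub, hcard⟩
  else 0

/-- The van der Waerden bracket polynomial `[[α β• γ]] ∈ R_{J,d}` (with parameter `s`). -/
noncomputable def vdW (J : Finset ℕ) (d s : ℕ)
    (α : Fin (s - 1) → ℕ) (β : Fin (d + 1) → ℕ) (γ : Fin (d - s) → ℕ) :
    BracketRing J d :=
  ∑ T : {T : Finset (Fin (d + 1)) // T.card = s},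
    have hTc : (T.1)ᶜ.card = d + 1 - s := by
      rw [Finset.card_compl, T.2, Fintype.card_fin]
    ((Equiv.Perm.sign (shuffle T.1 T.2) : ℤ)) •
      (fbr J d (fun k =>
          if h : (k : ℕ) < s - 1 then α ⟨(k : ℕ), h⟩
          else β ((T.1)ᶜ.orderIsoOfFin hTc
            ⟨(k : ℕ) - (s - 1), by have := k.isLt; omega⟩)) *
       fbr J d (fun k =>
          if h : (k : ℕ) < s then β (T.1.orderIsoOfFin T.2 ⟨(k : ℕ), h⟩)
          else γ ⟨(k : ℕ) - s, by have := k.isLt; omega⟩))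

/-- The lift `η_j : R_{J,d} → R_{J∪{j},d+1}`, sending `X_S` (with
`S = {s₁ < ⋯ < s_d}`) to the formal bracket `[s₁ ⋯ s_d j]`. -/
noncomputable def liftEta (J : Finset ℕ) (d : ℕ) (j : ℕ) :
    BracketRing J d →ₐ[ℂ] BracketRing (insert j J) (d + 1) :=
  MvPolynomial.aeval (fun S : {S : Finset ℕ // S ⊆ J ∧ S.card = d} =>
    fbr (insert j J) (d + 1) (fun k =>
      if h : (k : ℕ) < d then S.1.orderEmbOfFin S.2.2 ⟨(k : ℕ), h⟩ else j))

/-- The generic coordinatization `φ_{J,d}`, sending `X_S` (with `S = {s₁ < ⋯ < s_d}`) to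
the determinant of the `d × d` matrix `(x_{i, s_m})`. -/
noncomputable def genCoord (J : Finset ℕ) (d : ℕ) :
    BracketRing J d →ₐ[ℂ] MvPolynomial (ℕ × ℕ) ℂ :=
  MvPolynomial.aeval (fun S : {S : Finset ℕ // S ⊆ J ∧ S.card = d} =>
    Matrix.det (Matrix.of fun i m : Fin d =>
      MvPolynomial.X ((i : ℕ), (S.1.orderEmbOfFin S.2.2 m : ℕ))))

lemma shuffle_apply {n s : ℕ} (T : Finset (Fin n)) (hT : T.card = s)
    (hTc : Tᶜ.card = n - s) (k : Fin n) :
    shuffle T hT k = if h : (k : ℕ) < s then (T.orderEmbOfFin hT ⟨(k : ℕ), h⟩ : Fin n)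
      else (Tᶜ.orderEmbOfFin hTc ⟨(k : ℕ) - s, by have := k.isLt; omega⟩ : Fin n) := rfl

lemma sign_fixLast {n : ℕ} (σ : Equiv.Perm (Fin n)) (σ' : Equiv.Perm (Fin (n + 1)))
    (h1 : ∀ k : Fin n, σ' k.castSucc = (σ k).castSucc)
    (h2 : σ' (Fin.last n) = Fin.last n) :
    Equiv.Perm.sign σ' = Equiv.Perm.sign σ := by
  have hσ' : σ' = σ.viaFintypeEmbedding Fin.castSuccEmb := by
    ext x
    induction x using Fin.lastCases with
    | last =>
      rw [h2, Equiv.Perm.viaFintypeEmbedding_apply_notMem_range _ _ (by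
        rintro ⟨a, ha⟩
        simp only [Fin.coe_castSuccEmb] at ha
        exact (Fin.castSucc_lt_last a).ne ha)]
    | cast i =>
      have h3 := σ.viaFintypeEmbedding_apply_image Fin.castSuccEmb i
      simp only [Fin.coe_castSuccEmb] at h3
      rw [h1, h3]
  rw [hσ', Equiv.Perm.viaFintypeEmbedding_sign]

lemma fbr_eq_zero (J : Finset ℕ) (d : ℕ) (lam : Fin d → ℕ)
    (h : ¬(Function.Injective lam ∧ ∀ k, lam k ∈ J)) : fbr J d lam = 0 := by
  rw [fbr, dif_neg h]

lemma fbr_eq_of (J : Finset ℕ) (d : ℕ) (lam : Fin d → ℕ)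
    (h : Function.Injective lam ∧ ∀ k, lam k ∈ J)
    (S : {S : Finset ℕ // S ⊆ J ∧ S.card = d}) (σ : Equiv.Perm (Fin d))
    (hσ : ∀ k, lam k = S.1.orderEmbOfFin S.2.2 (σ k)) :
    fbr J d lam = ((Equiv.Perm.sign σ : ℤ)) • MvPolynomial.X S := by
  rw [fbr, dif_pos h]
  have him : Finset.image lam Finset.univ = S.1 := by
    apply Finset.eq_of_subset_of_card_le
    · intro x hx
      obtain ⟨k, -, rfl⟩ := Finset.mem_image.mp hx
      rw [hσ k]; exact Finset.orderEmbOfFin_mem _ _ _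
    · rw [S.2.2, Finset.card_image_of_injective _ h.1, Finset.card_univ, Fintype.card_fin]
  have hcard : (Finset.image lam Finset.univ).card = d := by
    rw [Finset.card_image_of_injective _ h.1, Finset.card_univ, Fintype.card_fin]
  have hemb : (fun i : Fin d => S.1.orderEmbOfFin S.2.2 i)
      = (Finset.image lam Finset.univ).orderEmbOfFin hcard := by
    apply Finset.orderEmbOfFin_unique
    · intro x; rw [him]; exact Finset.orderEmbOfFin_mem _ _ _
    · exact (S.1.orderEmbOfFin S.2.2).strictMono
  obtain ⟨Sv, hSsub, hScard⟩ := S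
  simp only at hσ him ⊢
  subst him
  congr 1
  · congr 1
    congr 1
    apply Equiv.ext
    intro k
    show ((Finset.image lam Finset.univ).orderIsoOfFin hcard).symm ⟨lam k, _⟩ = σ k
    rw [OrderIso.symm_apply_eq]
    apply Subtype.ext
    simpa using (hσ k)

lemma fbr_spec (J : Finset ℕ) (d : ℕ) (lam : Fin d → ℕ)
    (h : Function.Injective lam ∧ ∀ k, lam k ∈ J) :
    ∃ (S : {S : Finset ℕ // S ⊆ J ∧ S.card = d}) (σ : Equiv.Perm (Fin d)),
      (∀ k, lam k = S.1.orderEmbOfFin S.2.2 (σ k)) ∧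
      fbr J d lam = ((Equiv.Perm.sign σ : ℤ)) • MvPolynomial.X S := by
  have hsub : Finset.image lam Finset.univ ⊆ J := by
    intro x hx
    obtain ⟨k, _, rfl⟩ := Finset.mem_image.mp hx
    exact h.2 k
  have hcard : (Finset.image lam Finset.univ).card = d := by
    rw [Finset.card_image_of_injective _ h.1, Finset.card_univ, Fintype.card_fin]
  set e := (Finset.image lam Finset.univ).orderIsoOfFin hcard with he
  have hπ : Function.Bijective (fun k : Fin d =>
      e.symm ⟨lam k, Finset.mem_image_of_mem _ (Finset.mem_univ k)⟩) := by
    apply Finite.injective_iff_bijective.mp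
    intro p q hpq
    exact h.1 (congrArg Subtype.val (e.symm.injective hpq))
  refine ⟨⟨Finset.image lam Finset.univ, hsub, hcard⟩, Equiv.ofBijective _ hπ, fun k => ?_, ?_⟩
  · show lam k = (Finset.image lam Finset.univ).orderEmbOfFin hcard
      (e.symm ⟨lam k, Finset.mem_image_of_mem _ (Finset.mem_univ k)⟩)
    rw [← Finset.coe_orderIsoOfFin_apply, ← he, OrderIso.apply_symm_apply]
  · apply fbr_eq_of J d lam h
    intro k
    show lam k = (Finset.image lam Finset.univ).orderEmbOfFin hcard
      (e.symm ⟨lam k, Finset.mem_image_of_mem _ (Finset.mem_univ k)⟩)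
    rw [← Finset.coe_orderIsoOfFin_apply, ← he, OrderIso.apply_symm_apply]

lemma fbr_comp (J : Finset ℕ) (d : ℕ) (lam : Fin d → ℕ) (σ : Equiv.Perm (Fin d)) :
    fbr J d (fun k => lam (σ k)) = ((Equiv.Perm.sign σ : ℤ)) • fbr J d lam := by
  by_cases h : Function.Injective lam ∧ ∀ k, lam k ∈ J
  · obtain ⟨S, τ, hτ, hval⟩ := fbr_spec J d lam h
    have h' : Function.Injective (fun k => lam (σ k)) ∧ ∀ k, lam (σ k) ∈ J :=
      ⟨h.1.comp σ.injective, fun k => h.2 _⟩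
    rw [fbr_eq_of J d _ h' S (σ.trans τ) (fun k => hτ (σ k)), hval, smul_smul]
    congr 1
    rw [← Equiv.Perm.mul_def, Equiv.Perm.sign_mul, Units.val_mul]
    exact mul_comm _ _
  · have h' : ¬(Function.Injective (fun k => lam (σ k)) ∧ ∀ k, lam (σ k) ∈ J) := by
      rintro ⟨h1, h2⟩
      refine h ⟨fun a b hab => ?_, fun k => by simpa using h2 (σ.symm k)⟩
      have h3 : σ.symm a = σ.symm b := h1 (show lam (σ (σ.symm a)) = lam (σ (σ.symm b)) by
        simpa using hab)
      simpa using congrArg σ h3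
    rw [fbr_eq_zero _ _ _ h, fbr_eq_zero _ _ _ h', smul_zero]

lemma fbr_comp' (J : Finset ℕ) (d : ℕ) (lam lam' : Fin d → ℕ) (σ : Equiv.Perm (Fin d))
    (h : ∀ k, lam' k = lam (σ k)) :
    fbr J d lam' = ((Equiv.Perm.sign σ : ℤ)) • fbr J d lam := by
  rw [show lam' = fun k => lam (σ k) from funext h, fbr_comp]

lemma fbr_lift (J : Finset ℕ) (d : ℕ) (j : ℕ) (hj : j ∉ J) (lam : Fin d → ℕ) :
    liftEta J d j (fbr J d lam) =
      fbr (insert j J) (d + 1)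
        (fun k => if h : (k : ℕ) < d then lam ⟨(k : ℕ), h⟩ else j) := by
  have hlast : ∀ σ : Equiv.Perm (Fin d),
      (σ.viaFintypeEmbedding Fin.castSuccEmb) (Fin.last d) = Fin.last d := by
    intro σ
    apply Equiv.Perm.viaFintypeEmbedding_apply_notMem_range
    rintro ⟨a, ha⟩
    simp only [Fin.coe_castSuccEmb] at ha
    exact (Fin.castSucc_lt_last a).ne ha
  by_cases h : Function.Injective lam ∧ ∀ k, lam k ∈ J
  · obtain ⟨S, σ, hσ, hval⟩ := fbr_spec J d lam h
    rw [hval, map_zsmul]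
    simp only [liftEta, MvPolynomial.aeval_X]
    have happ : ∀ k : Fin (d + 1),
        (if h : (k : ℕ) < d then lam ⟨(k : ℕ), h⟩ else j)
        = (fun k' : Fin (d + 1) =>
            if h : (k' : ℕ) < d then S.1.orderEmbOfFin S.2.2 ⟨(k' : ℕ), h⟩ else j)
          ((σ.viaFintypeEmbedding Fin.castSuccEmb) k) := by
      intro k
      induction k using Fin.lastCases with
      | last =>
        rw [hlast σ]
        simp only [Fin.val_last, lt_irrefl, dif_neg, not_false_iff]
      | cast i =>
        have h1 : (σ.viaFintypeEmbedding Fin.castSuccEmb) i.castSucc = (σ i).castSucc := by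
          simpa using σ.viaFintypeEmbedding_apply_image Fin.castSuccEmb i
        rw [h1]
        simp only [Fin.coe_castSucc, i.isLt, (σ i).isLt, dif_pos, Fin.eta]
        exact hσ i
    rw [fbr_comp' (insert j J) (d + 1)
        (fun k' : Fin (d + 1) =>
          if h : (k' : ℕ) < d then S.1.orderEmbOfFin S.2.2 ⟨(k' : ℕ), h⟩ else j)
        (fun k : Fin (d + 1) => if h : (k : ℕ) < d then lam ⟨(k : ℕ), h⟩ else j)
        (σ.viaFintypeEmbedding Fin.castSuccEmb) happ,
      Equiv.Perm.viaFintypeEmbedding_sign]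
  · rw [fbr_eq_zero _ _ _ h, map_zero, fbr_eq_zero]
    rintro ⟨hinj, hmem⟩
    have hcs : ∀ a : Fin d,
        (if h : ((a.castSucc : Fin (d + 1)) : ℕ) < d then lam ⟨((a.castSucc : Fin (d+1)) : ℕ), h⟩ else j)
          = lam a := by
      intro a
      simp only [Fin.coe_castSucc, a.isLt, dif_pos, Fin.eta]
    have hlam : ∀ a : Fin d, lam a ≠ j := by
      intro a haj
      have h1 : (fun k : Fin (d + 1) => if h : (k : ℕ) < d then lam ⟨(k : ℕ), h⟩ else j) a.castSucc
          = (fun k : Fin (d + 1) => if h : (k : ℕ) < d then lam ⟨(k : ℕ), h⟩ else j) (Fin.last d) := by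
        simp only [hcs a, haj, Fin.val_last, lt_irrefl, dif_neg, not_false_iff]
      exact (Fin.castSucc_lt_last a).ne (hinj h1)
    apply h
    constructor
    · intro a b hab
      have h1 : (fun k : Fin (d + 1) => if h : (k : ℕ) < d then lam ⟨(k : ℕ), h⟩ else j) a.castSucc
          = (fun k : Fin (d + 1) => if h : (k : ℕ) < d then lam ⟨(k : ℕ), h⟩ else j) b.castSucc := by
        simp only [hcs a, hcs b, hab]
      have := hinj h1
      exact Fin.castSucc_injective _ this
    · intro k
      have h1 := hmem k.castSucc
      rw [hcs k] at h1
      rcases Finset.mem_insert.mp h1 with h2 | h2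
      · exact absurd h2 (hlam k)
      · exact h2

lemma orderEmbOfFin_map_castSucc {n s : ℕ} (T : Finset (Fin n)) (hT : T.card = s)
    (hT' : (T.map Fin.castSuccEmb).card = s) (i : Fin s) :
    (T.map Fin.castSuccEmb).orderEmbOfFin hT' i = (T.orderEmbOfFin hT i).castSucc := by
  have h := Finset.orderEmbOfFin_unique hT'
    (f := fun i : Fin s => (T.orderEmbOfFin hT i).castSucc)
    (fun i => by
      rw [Finset.mem_map]
      exact ⟨T.orderEmbOfFin hT i, Finset.orderEmbOfFin_mem _ _ _, rfl⟩)
    (fun a b hab => by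
      exact Fin.castSucc_lt_castSucc_iff.mpr ((T.orderEmbOfFin hT).strictMono hab))
  exact (congrFun h i).symm

lemma compl_map_orderEmbOfFin {n s : ℕ} (T : Finset (Fin n)) (hs : s ≤ n)
    (hTc : Tᶜ.card = n - s)
    (hTc' : (T.map Fin.castSuccEmb)ᶜ.card = n + 1 - s) (i : Fin (n + 1 - s)) :
    (T.map Fin.castSuccEmb)ᶜ.orderEmbOfFin hTc' i =
      if h : (i : ℕ) < n - s then (Tᶜ.orderEmbOfFin hTc ⟨(i : ℕ), h⟩).castSucc
      else Fin.last n := by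
  have h := Finset.orderEmbOfFin_unique hTc'
    (f := fun i : Fin (n + 1 - s) =>
      if h : (i : ℕ) < n - s then (Tᶜ.orderEmbOfFin hTc ⟨(i : ℕ), h⟩).castSucc
      else Fin.last n)
    (fun i => by
      by_cases h : (i : ℕ) < n - s
      · rw [dif_pos h, Finset.mem_compl, Finset.mem_map]
        rintro ⟨y, hy, hy2⟩
        simp only [Fin.castSuccEmb, Fin.castAddEmb] at hy2
        have : y = Tᶜ.orderEmbOfFin hTc ⟨(i : ℕ), h⟩ :=
          Fin.castSucc_injective _ hy2
        subst this
        exact Finset.mem_compl.mp (Finset.orderEmbOfFin_mem _ _ _) hy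
      · rw [dif_neg h, Finset.mem_compl, Finset.mem_map]
        rintro ⟨y, hy, hy2⟩
        simp only [Fin.castSuccEmb, Fin.castAddEmb] at hy2
        exact (Fin.castSucc_lt_last y).ne hy2)
    (fun a b hab => by
      dsimp only
      by_cases ha : (a : ℕ) < n - s <;> by_cases hb : (b : ℕ) < n - s
      · rw [dif_pos ha, dif_pos hb]
        exact Fin.castSucc_lt_castSucc_iff.mpr
          ((Tᶜ.orderEmbOfFin hTc).strictMono (by exact hab))
      · rw [dif_pos ha, dif_neg hb]
        exact Fin.castSucc_lt_last _
      · exfalso; have := a.isLt; have := b.isLt; have : (a : ℕ) < (b : ℕ) := hab; omega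
      · exfalso; have := a.isLt; have := b.isLt; have : (a : ℕ) < (b : ℕ) := hab; omega)
  exact (congrFun h i).symm

lemma sign_shuffle_map {n s : ℕ} (hs : s ≤ n) (T : Finset (Fin n)) (hT : T.card = s)
    (hT' : (T.map Fin.castSuccEmb).card = s) :
    Equiv.Perm.sign (shuffle (T.map Fin.castSuccEmb) hT') = Equiv.Perm.sign (shuffle T hT) := by
  have hTc : Tᶜ.card = n - s := by rw [Finset.card_compl, hT, Fintype.card_fin]
  have hTc' : (T.map Fin.castSuccEmb)ᶜ.card = (n + 1) - s := by
    rw [Finset.card_compl, hT', Fintype.card_fin]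
  apply sign_fixLast
  · intro k
    rw [shuffle_apply (T.map Fin.castSuccEmb) hT' hTc' k.castSucc,
        shuffle_apply T hT hTc k]
    by_cases h : (k : ℕ) < s
    · rw [dif_pos (show ((k.castSucc : Fin (n+1)) : ℕ) < s from h), dif_pos h]
      rw [orderEmbOfFin_map_castSucc T hT hT']
      rfl
    · rw [dif_neg (show ¬ ((k.castSucc : Fin (n+1)) : ℕ) < s from h), dif_neg h]
      rw [compl_map_orderEmbOfFin T hs hTc hTc',
        dif_pos (show ((⟨((k.castSucc : Fin (n+1)) : ℕ) - s, _⟩ : Fin (n + 1 - s)) : ℕ) < n - s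
          from by simp only [Fin.coe_castSucc]; have := k.isLt; omega)]
      rfl
  · rw [shuffle_apply (T.map Fin.castSuccEmb) hT' hTc' (Fin.last n),
        dif_neg (show ¬ ((Fin.last n : Fin (n+1)) : ℕ) < s from by simp [Fin.val_last]; omega),
        compl_map_orderEmbOfFin T hs hTc hTc', dif_neg (by simp [Fin.val_last])]

lemma vdW_eq (J : Finset ℕ) (d s : ℕ)
    (α : Fin (s - 1) → ℕ) (β : Fin (d + 1) → ℕ) (γ : Fin (d - s) → ℕ) :
    vdW J d s α β γ = ∑ T : {T : Finset (Fin (d + 1)) // T.card = s},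
      ((Equiv.Perm.sign (shuffle T.1 T.2) : ℤ)) •
        (fbr J d (fun k =>
            if h : (k : ℕ) < s - 1 then α ⟨(k : ℕ), h⟩
            else β ((T.1)ᶜ.orderEmbOfFin
              (show ((T.1)ᶜ).card = d + 1 - s by
                rw [Finset.card_compl, T.2, Fintype.card_fin])
              ⟨(k : ℕ) - (s - 1), by have := k.isLt; omega⟩)) *
         fbr J d (fun k =>
            if h : (k : ℕ) < s then β (T.1.orderEmbOfFin T.2 ⟨(k : ℕ), h⟩)
            else γ ⟨(k : ℕ) - s, by have := k.isLt; omega⟩)) := rfl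

lemma beta_app {d : ℕ} (β : Fin (d + 1) → ℕ) (j : ℕ) (x : Fin (d + 1)) :
    (if h : ((x.castSucc : Fin (d + 1 + 1)) : ℕ) < d + 1
      then β ⟨((x.castSucc : Fin (d + 1 + 1)) : ℕ), h⟩ else j) = β x := by
  rw [dif_pos (show ((x.castSucc : Fin (d + 1 + 1)) : ℕ) < d + 1 from by
    simp only [Fin.coe_castSucc]; exact x.isLt)]
  exact congrArg β (Fin.ext (by simp))

lemma beta_app_last {d : ℕ} (β : Fin (d + 1) → ℕ) (j : ℕ) :
    (if h : ((Fin.last (d + 1) : Fin (d + 1 + 1)) : ℕ) < d + 1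
      then β ⟨((Fin.last (d + 1) : Fin (d + 1 + 1)) : ℕ), h⟩ else j) = j := by
  rw [dif_neg (show ¬ ((Fin.last (d + 1) : Fin (d + 1 + 1)) : ℕ) < d + 1 from by
    simp only [Fin.val_last]; omega)]

set_option maxHeartbeats 2000000 in
theorem lift_of_vanderWaerden_eq_vanderWaerden
    (d s : ℕ) (hd : 1 ≤ d) (hs : 1 ≤ s) (hsd : s ≤ d)
    (J : Finset ℕ) (hJ : d ≤ J.card) (j : ℕ) (hj : j ∉ J)
    (α : Fin (s - 1) → ℕ) (hα : ∀ k, α k ∈ J)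
    (β : Fin (d + 1) → ℕ) (hβ : ∀ k, β k ∈ J)
    (γ : Fin (d - s) → ℕ) (hγ : ∀ k, γ k ∈ J) :
    liftEta J d j (vdW J d s α β γ) =
      vdW (insert j J) (d + 1) s α
        (fun k => if h : (k : ℕ) < d + 1 then β ⟨(k : ℕ), h⟩ else j)
        (fun k => if h : (k : ℕ) < d - s then γ ⟨(k : ℕ), h⟩ else j) := by
  classical
  rw [vdW_eq, vdW_eq, map_sum]
  refine Finset.sum_of_injOn
    (fun T : {T : Finset (Fin (d + 1)) // T.card = s} =>
      (⟨T.1.map Fin.castSuccEmb, by rw [Finset.card_map]; exact T.2⟩ :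
        {T' : Finset (Fin (d + 1 + 1)) // T'.card = s}))
    (fun a _ b _ hab => ?_) (fun a _ => Finset.mem_univ _)
    (fun T' _ hT' => ?_) (fun T _ => ?_)
  · -- injectivity
    exact Subtype.ext (Finset.map_injective Fin.castSuccEmb (congrArg Subtype.val hab))
  · -- vanishing
    have hlast : Fin.last (d + 1) ∈ T'.1 := by
      by_contra hl
      apply hT'
      have hmap : (Finset.univ.filter
          (fun x : Fin (d + 1) => x.castSucc ∈ T'.1)).map Fin.castSuccEmb = T'.1 := by
        ext y
        rw [Finset.mem_map]
        constructor
        · rintro ⟨x, hx, rfl⟩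
          exact (Finset.mem_filter.mp hx).2
        · intro hy
          have hyl : y ≠ Fin.last (d + 1) := fun h => hl (h ▸ hy)
          obtain ⟨x, rfl⟩ := Fin.exists_castSucc_eq.mpr hyl
          exact ⟨x, Finset.mem_filter.mpr ⟨Finset.mem_univ _, hy⟩, rfl⟩
      have hcard : (Finset.univ.filter
          (fun x : Fin (d + 1) => x.castSucc ∈ T'.1)).card = s := by
        have h1 := congrArg Finset.card hmap
        rw [Finset.card_map] at h1
        rw [h1, T'.2]
      exact ⟨⟨_, hcard⟩, Finset.mem_coe.mpr (Finset.mem_univ _), Subtype.ext hmap⟩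
    -- second factor is zero
    have hzero : fbr (insert j J) (d + 1) (fun k : Fin (d + 1) =>
        if h : (k : ℕ) < s then
          (fun k' : Fin (d + 1 + 1) => if h' : (k' : ℕ) < d + 1 then β ⟨(k' : ℕ), h'⟩ else j)
            (T'.1.orderEmbOfFin T'.2 ⟨(k : ℕ), h⟩)
        else (fun k' : Fin (d + 1 - s) => if h' : (k' : ℕ) < d - s then γ ⟨(k' : ℕ), h'⟩ else j)
          ⟨(k : ℕ) - s, by have := k.isLt; omega⟩) = 0 := by
      apply fbr_eq_zero
      rintro ⟨hinj, -⟩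
      obtain ⟨i₀, hi₀⟩ : ∃ i₀ : Fin s, T'.1.orderEmbOfFin T'.2 i₀ = Fin.last (d + 1) := by
        have h1 : Fin.last (d + 1) ∈ Set.range (T'.1.orderEmbOfFin T'.2) := by
          rw [Finset.range_orderEmbOfFin]
          exact_mod_cast hlast
        exact h1
      have hik : (⟨(i₀ : ℕ), by have := i₀.isLt; omega⟩ : Fin (d + 1)) =
          (⟨d, by omega⟩ : Fin (d + 1)) := by
        apply hinj
        dsimp only
        rw [dif_pos (show ((⟨(i₀ : ℕ), by have := i₀.isLt; omega⟩ : Fin (d + 1)) : ℕ) < s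
              from i₀.isLt),
          dif_neg (show ¬ d < s by omega)]
        rw [show (⟨((⟨(i₀ : ℕ), by have := i₀.isLt; omega⟩ : Fin (d + 1)) : ℕ), i₀.isLt⟩ : Fin s)
            = i₀ from Fin.ext rfl]
        rw [hi₀]
        simp only [Fin.val_last]
        rw [dif_neg (show ¬ d + 1 < d + 1 by omega)]
        rw [dif_neg (show ¬ d - s < d - s by omega)]
      have h2 : (i₀ : ℕ) = d := congrArg Fin.val hik
      have := i₀.isLt
      omega
    rw [hzero, mul_zero, smul_zero]
  · -- term equality
    have hTc : ((T.1)ᶜ).card = d + 1 - s := by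
      rw [Finset.card_compl, T.2, Fintype.card_fin]
    have hTc' : ((T.1.map Fin.castSuccEmb)ᶜ).card = (d + 1) + 1 - s := by
      rw [Finset.card_compl, Finset.card_map, T.2, Fintype.card_fin]
    rw [map_zsmul, map_mul, fbr_lift J d j hj, fbr_lift J d j hj]
    congr 1
    · exact congrArg Units.val
        (sign_shuffle_map (show s ≤ d + 1 by omega) T.1 T.2
          (by rw [Finset.card_map]; exact T.2)).symm
    congr 1
    · -- first factor
      refine congrArg _ (funext fun k => ?_)
      by_cases h3 : (k : ℕ) < d
      · rw [dif_pos h3]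
        dsimp only
        by_cases h2 : (k : ℕ) < s - 1
        · rw [dif_pos h2, dif_pos h2]
        · rw [dif_neg h2, dif_neg h2,
            compl_map_orderEmbOfFin T.1 (show s ≤ d + 1 by omega) hTc hTc',
            dif_pos (show (k : ℕ) - (s - 1) < (d + 1) - s by omega),
            beta_app]
      · rw [dif_neg h3, dif_neg (show ¬ (k : ℕ) < s - 1 by omega),
          compl_map_orderEmbOfFin T.1 (show s ≤ d + 1 by omega) hTc hTc',
          dif_neg (show ¬ (k : ℕ) - (s - 1) < (d + 1) - s by have := k.isLt; omega),
          beta_app_last]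
    · -- second factor
      refine congrArg _ (funext fun k => ?_)
      by_cases h1 : (k : ℕ) < s
      · rw [dif_pos (show (k : ℕ) < d by omega)]
        dsimp only
        rw [dif_pos h1, dif_pos h1,
          orderEmbOfFin_map_castSucc T.1 T.2 (by rw [Finset.card_map]; exact T.2),
          beta_app]
      · by_cases h3 : (k : ℕ) < d
        · rw [dif_pos h3]
          dsimp only
          rw [dif_neg h1, dif_neg h1]
          rw [dif_pos (show (k : ℕ) - s < d - s by omega)]
        · rw [dif_neg h3, dif_neg h1]
          dsimp only
          rw [dif_neg (show ¬ (k : ℕ) - s < d - s by have := k.isLt; omega)]
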